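/- arXiv:1105.3344 — 3 statements merged into one kernel-verified Lean document; each statement's English description precedes it below -/
import Mathlib

section
/- Let F : ℂ₊ → ℂ₊ be an analytic function on the upper half-plane with Im F(z) > Im z for all z, satisfying the functional equation F(F(z)) - F(z) = F(z) - z for all z in the upper half-plane. Then there exist a ∈ ℝ and b > 0 such that F(z) = z + a + ib for all z. -/
open Complex Metric Filter ComplexConjugate Topology

lemma norm_sub_lt_norm_sub_conj {w v : ℂ} (hw : 0 < w.im) (hv : 0 < v.im) :
    ‖w - v‖ < ‖w - conj v‖ := by
  have h2 : ‖w - v‖ ^ 2 < ‖w - conj v‖ ^ 2 := by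
    rw [Complex.sq_norm, Complex.sq_norm]
    simp [Complex.normSq_apply, Complex.sub_re, Complex.sub_im, Complex.conj_re, Complex.conj_im]
    nlinarith [mul_pos hw hv]
  exact lt_of_pow_lt_pow_left₀ 2 (norm_nonneg _) h2

lemma sub_conj_ne_zero {w v : ℂ} (hw : 0 < w.im) (hv : 0 < v.im) : w - conj v ≠ 0 := by
  intro hcon
  have : (w - conj v).im = 0 := by rw [hcon]; simp
  simp [Complex.sub_im, Complex.conj_im] at this
  linarith

lemma halfplane_schwarz_pick {G : ℂ → ℂ}
    (hd : DifferentiableOn ℂ G {z : ℂ | 0 < z.im})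
    (hm : ∀ z : ℂ, 0 < z.im → 0 < (G z).im) {a b : ℂ} (ha : 0 < a.im) (hb : 0 < b.im) :
    ‖G a - G b‖ * ‖a - conj b‖ ≤ ‖G a - conj (G b)‖ * ‖a - b‖ := by
  set q := G b with hqdef
  have hq : 0 < q.im := hm b hb
  set S : ℂ → ℂ := fun u => (b - conj b * u) / (1 - u) with hS
  set T : ℂ → ℂ := fun w => (w - q) / (w - conj q) with hT
  set h : ℂ → ℂ := fun u => T (G (S u)) with hh
  -- S maps the unit ball into the half-plane
  have him_S : ∀ u ∈ ball (0:ℂ) 1, 0 < (S u).im := by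
    intro u hu
    have hu1 : Complex.normSq u < 1 := by
      have h1 : ‖u‖ < 1 := by simpa using mem_ball_zero_iff.mp hu
      have h2 := Complex.sq_norm u
      nlinarith [norm_nonneg u]
    have hd1 : (1:ℂ) - u ≠ 0 := by
      intro hcon
      have : u = 1 := by linear_combination -hcon
      rw [this] at hu; simp at hu
    have hns : 0 < Complex.normSq (1 - u) := Complex.normSq_pos.mpr hd1
    have key : (S u).im = b.im * (1 - Complex.normSq u) / Complex.normSq (1 - u) := by
      rw [hS]
      simp only [Complex.div_im]
      rw [div_sub_div_same]
      congr 1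
      simp [Complex.sub_re, Complex.sub_im, Complex.mul_re, Complex.mul_im,
        Complex.conj_re, Complex.conj_im, Complex.one_re, Complex.one_im, Complex.normSq_apply]
      ring
    rw [key]
    apply div_pos _ hns
    nlinarith [hb]
  have hS0 : S 0 = b := by rw [hS]; simp
  -- T maps the half-plane into the unit ball
  have hTmaps : ∀ w : ℂ, 0 < w.im → ‖T w‖ < 1 := by
    intro w hw
    have h1 := norm_sub_lt_norm_sub_conj hw hq
    have h2 : 0 < ‖w - conj q‖ := lt_of_le_of_lt (norm_nonneg _) h1
    rw [hT]
    simp only [norm_div]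
    rw [div_lt_one h2]
    exact h1
  have hh0 : h 0 = 0 := by rw [hh]; simp only [hS0, ← hqdef, hT, sub_self, zero_div]
  -- differentiability
  have hdS : DifferentiableOn ℂ S (ball (0:ℂ) 1) := by
    apply DifferentiableOn.div
    · exact (differentiable_const b).differentiableOn.sub
        ((differentiable_id.const_mul _).differentiableOn)
    · exact (differentiable_const (1:ℂ)).differentiableOn.sub differentiable_id.differentiableOn
    · intro u hu
      intro hcon
      have : u = 1 := by linear_combination -hcon
      rw [this] at hu; simp at hu
  have hdGS : DifferentiableOn ℂ (fun u => G (S u)) (ball (0:ℂ) 1) :=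
    hd.comp hdS (fun u hu => him_S u hu)
  have hdh : DifferentiableOn ℂ h (ball (0:ℂ) 1) := by
    rw [hh, hT]
    apply DifferentiableOn.div
    · exact hdGS.sub (differentiable_const q).differentiableOn
    · exact hdGS.sub (differentiable_const (conj q)).differentiableOn
    · intro u hu
      exact sub_conj_ne_zero (hm _ (him_S u hu)) hq
  have hmaps : Set.MapsTo h (ball (0:ℂ) 1) (ball (h 0) 1) := by
    rw [hh0]
    intro u hu
    rw [mem_ball_zero_iff]
    exact hTmaps _ (hm _ (him_S u hu))
  -- the point u₀
  have hab : a - conj b ≠ 0 := sub_conj_ne_zero ha hb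
  have hbb : b - conj b ≠ 0 := sub_conj_ne_zero hb hb
  set u₀ : ℂ := (a - b) / (a - conj b) with hu₀def
  have hu₀ : u₀ ∈ ball (0:ℂ) 1 := by
    rw [mem_ball_zero_iff, hu₀def, norm_div,
      div_lt_one (lt_of_le_of_lt (norm_nonneg _) (norm_sub_lt_norm_sub_conj ha hb))]
    exact norm_sub_lt_norm_sub_conj ha hb
  have hSa : S u₀ = a := by
    rw [hS, hu₀def]
    field_simp
    rw [show a - conj b - (a - b) = b - conj b by ring, div_eq_iff hbb]
    ring
  have key := dist_le_div_mul_dist_of_mapsTo_ball hdh (hmaps.mono_right ball_subset_closedBall) hu₀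
  rw [hh0, dist_zero_right, dist_zero_right, div_one, one_mul] at key
  have key2 : ‖T (G a)‖ ≤ ‖u₀‖ := by rw [← hSa]; exact key
  rw [hT] at key2
  simp only [norm_div] at key2
  rw [hu₀def, norm_div] at key2
  have d1 : 0 < ‖G a - conj q‖ :=
    lt_of_le_of_lt (norm_nonneg _) (norm_sub_lt_norm_sub_conj (hm a ha) hq)
  have d2 : 0 < ‖a - conj b‖ :=
    lt_of_le_of_lt (norm_nonneg _) (norm_sub_lt_norm_sub_conj ha hb)
  rw [div_le_div_iff₀ d1 d2] at key2
  linarith [key2]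
lemma normSq_eq_of_ineq {p q : ℂ} (hp : 0 < p.im) (hq : 0 < q.im)
    (h : ∀ t : ℝ, 0 < t →
      ‖p - q‖ * ‖p - (t:ℂ) * conj q‖ ≤ ‖p - conj q‖ * ‖p - (t:ℂ) * q‖) :
    Complex.normSq p = Complex.normSq q := by
  have key : ∀ t : ℝ, 0 < t →
      Complex.normSq (p - q) * Complex.normSq (p - (t:ℂ) * conj q) ≤
      Complex.normSq (p - conj q) * Complex.normSq (p - (t:ℂ) * q) := by
    intro t ht
    have h1 := h t ht
    have h2 : (‖p - q‖ * ‖p - (t:ℂ) * conj q‖) ^ 2 ≤ (‖p - conj q‖ * ‖p - (t:ℂ) * q‖) ^ 2 := by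
      apply pow_le_pow_left₀ (by positivity) h1
    simpa [mul_pow, Complex.sq_norm, mul_comm, mul_left_comm] using h2
  set A := Complex.normSq p with hA
  set B := Complex.normSq q with hB
  have hq0 : q ≠ 0 := by intro hcon; rw [hcon] at hq; simp at hq
  have hBpos : 0 < B := Complex.normSq_pos.mpr hq0
  have hfac : ∀ t : ℝ,
      Complex.normSq (p - conj q) * Complex.normSq (p - (t:ℂ) * q) -
      Complex.normSq (p - q) * Complex.normSq (p - (t:ℂ) * conj q) =
      4 * p.im * q.im * (1 - t) * (A - t * B) := by
    intro t
    rw [hA, hB]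
    simp only [Complex.normSq_apply, Complex.sub_re, Complex.sub_im, Complex.mul_re,
      Complex.mul_im, Complex.conj_re, Complex.conj_im, Complex.ofReal_re, Complex.ofReal_im]
    ring
  set t₀ : ℝ := (A + B) / (2 * B) with ht₀
  have hApos : 0 < A := Complex.normSq_pos.mpr (by intro hcon; rw [hcon] at hp; simp at hp)
  have ht₀pos : 0 < t₀ := by positivity
  have h0 : 0 ≤ 4 * p.im * q.im * (1 - t₀) * (A - t₀ * B) := by
    have := key t₀ ht₀pos
    nlinarith [hfac t₀]
  have e1 : 2 * B * t₀ = A + B := by rw [ht₀]; field_simp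
  have e2 : (1 - t₀) * (2 * B) = B - A := by linear_combination -e1
  have e3 : (A - t₀ * B) * 2 = A - B := by linear_combination -e1
  have h4 : 0 ≤ (4 * p.im * q.im * (1 - t₀) * (A - t₀ * B)) * (4 * B) :=
    mul_nonneg h0 (by positivity)
  have h5 : (4 * p.im * q.im * (1 - t₀) * (A - t₀ * B)) * (4 * B) =
      -(4 * p.im * q.im) * (A - B) ^ 2 := by
    linear_combination (4 * p.im * q.im * ((A - t₀ * B) * 2)) * e2 +
      (4 * p.im * q.im * (B - A)) * e3
  rw [h5] at h4
  have h6 : (A - B) ^ 2 ≤ 0 := by nlinarith [mul_pos hp hq]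
  have h7 : (A - B) ^ 2 = 0 := le_antisymm h6 (sq_nonneg (A - B))
  have h8 : A - B = 0 := by
    exact pow_eq_zero_iff two_ne_zero |>.mp h7
  linarith
lemma limit_ineq {p q z w : ℂ} (t : ℝ) (ht : 0 < t)
    (h : ∀ k mk : ℕ, ‖p - q‖ * ‖(z + (k:ℂ) * p) - (conj w + (mk:ℂ) * conj q)‖ ≤
      ‖p - conj q‖ * ‖(z + (k:ℂ) * p) - (w + (mk:ℂ) * q)‖) :
    ‖p - q‖ * ‖p - (t:ℂ) * conj q‖ ≤ ‖p - conj q‖ * ‖p - (t:ℂ) * q‖ := by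
  set m : ℕ → ℕ := fun k => ⌊t * k⌋₊ with hm
  have hinv : Tendsto (fun k : ℕ => 1 / (k:ℝ)) atTop (𝓝 0) := tendsto_one_div_atTop_nhds_zero_nat
  have hm_t : Tendsto (fun k : ℕ => (m k : ℝ) / (k:ℝ)) atTop (𝓝 t) := by
    apply tendsto_of_tendsto_of_tendsto_of_le_of_le'
      (g := fun k : ℕ => t - 1 / (k:ℝ)) (h := fun _ : ℕ => t)
    · simpa using tendsto_const_nhds.sub hinv
    · exact tendsto_const_nhds
    · filter_upwards [eventually_ge_atTop 1] with k hk
      have hk0 : (0:ℝ) < (k:ℝ) := by exact_mod_cast hk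
      rw [sub_le_iff_le_add, ← add_div, le_div_iff₀ hk0]
      have := Nat.sub_one_lt_floor (t * k)
      nlinarith [this]
    · filter_upwards [eventually_ge_atTop 1] with k hk
      have hk0 : (0:ℝ) < (k:ℝ) := by exact_mod_cast hk
      rw [div_le_iff₀ hk0]
      exact Nat.floor_le (by positivity)
  have hcast1 : Tendsto (fun k : ℕ => ((1 / (k:ℝ) : ℝ) : ℂ)) atTop (𝓝 0) := by
    have := (Complex.continuous_ofReal.tendsto (0:ℝ)).comp hinv
    simpa [Function.comp_def] using this
  have hcast2 : Tendsto (fun k : ℕ => (((m k : ℝ) / (k:ℝ) : ℝ) : ℂ)) atTop (𝓝 (t:ℂ)) :=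
    (Complex.continuous_ofReal.tendsto t).comp hm_t
  have hLin : Tendsto (fun k : ℕ =>
      ((1 / (k:ℝ) : ℝ) : ℂ) * (z - conj w) + p - (((m k : ℝ) / (k:ℝ) : ℝ) : ℂ) * conj q)
      atTop (𝓝 ((0:ℂ) * (z - conj w) + p - (t:ℂ) * conj q)) :=
    ((hcast1.mul (tendsto_const_nhds (x := z - conj w))).add
      (tendsto_const_nhds (x := p))).sub (hcast2.mul (tendsto_const_nhds (x := conj q)))
  have hRin : Tendsto (fun k : ℕ =>
      ((1 / (k:ℝ) : ℝ) : ℂ) * (z - w) + p - (((m k : ℝ) / (k:ℝ) : ℝ) : ℂ) * q)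
      atTop (𝓝 ((0:ℂ) * (z - w) + p - (t:ℂ) * q)) :=
    ((hcast1.mul (tendsto_const_nhds (x := z - w))).add
      (tendsto_const_nhds (x := p))).sub (hcast2.mul (tendsto_const_nhds (x := q)))
  have hL : Tendsto (fun k : ℕ =>
      ‖p - q‖ * ‖((1 / (k:ℝ) : ℝ) : ℂ) * (z - conj w) + p - (((m k : ℝ) / (k:ℝ) : ℝ) : ℂ) * conj q‖)
      atTop (𝓝 (‖p - q‖ * ‖p - (t:ℂ) * conj q‖)) := by
    have := (tendsto_const_nhds (x := ‖p - q‖) (f := atTop (α := ℕ))).mul hLin.norm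
    simpa using this
  have hR : Tendsto (fun k : ℕ =>
      ‖p - conj q‖ * ‖((1 / (k:ℝ) : ℝ) : ℂ) * (z - w) + p - (((m k : ℝ) / (k:ℝ) : ℝ) : ℂ) * q‖)
      atTop (𝓝 (‖p - conj q‖ * ‖p - (t:ℂ) * q‖)) := by
    have := (tendsto_const_nhds (x := ‖p - conj q‖) (f := atTop (α := ℕ))).mul hRin.norm
    simpa using this
  apply le_of_tendsto_of_tendsto hL hR
  filter_upwards [eventually_ge_atTop 1] with k hk
  have hk0 : (0:ℝ) < (k:ℝ) := by exact_mod_cast hk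
  have hkC : ((k:ℕ):ℂ) ≠ 0 := Nat.cast_ne_zero.mpr (by omega)
  have e1 : (z + (k:ℂ) * p) - (conj w + ((m k : ℕ):ℂ) * conj q) =
      (((k:ℝ)):ℂ) * (((1 / (k:ℝ) : ℝ) : ℂ) * (z - conj w) + p -
        (((m k : ℝ) / (k:ℝ) : ℝ) : ℂ) * conj q) := by
    push_cast
    field_simp [hkC]
    ring
  have e2 : (z + (k:ℂ) * p) - (w + ((m k : ℕ):ℂ) * q) =
      (((k:ℝ)):ℂ) * (((1 / (k:ℝ) : ℝ) : ℂ) * (z - w) + p -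
        (((m k : ℝ) / (k:ℝ) : ℝ) : ℂ) * q) := by
    push_cast
    field_simp [hkC]
    ring
  have h0 := h k (m k)
  rw [e1, e2, norm_mul, norm_mul] at h0
  have hnk : ‖(((k:ℝ)):ℂ)‖ = (k:ℝ) := by
    simp [Complex.norm_real, abs_of_pos hk0]
  rw [hnk] at h0
  have := mul_le_mul_of_nonneg_left h0 (le_of_lt (inv_pos.mpr hk0))
  calc ‖p - q‖ * ‖((1 / (k:ℝ) : ℝ) : ℂ) * (z - conj w) + p - (((m k : ℝ) / (k:ℝ) : ℝ) : ℂ) * conj q‖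
      = ((k:ℝ))⁻¹ * (‖p - q‖ * ((k:ℝ) * ‖((1 / (k:ℝ) : ℝ) : ℂ) * (z - conj w) + p - (((m k : ℝ) / (k:ℝ) : ℝ) : ℂ) * conj q‖)) := by
        field_simp; try ring
    _ ≤ ((k:ℝ))⁻¹ * (‖p - conj q‖ * ((k:ℝ) * ‖((1 / (k:ℝ) : ℝ) : ℂ) * (z - w) + p - (((m k : ℝ) / (k:ℝ) : ℝ) : ℂ) * q‖)) := this
    _ = ‖p - conj q‖ * ‖((1 / (k:ℝ) : ℝ) : ℂ) * (z - w) + p - (((m k : ℝ) / (k:ℝ) : ℝ) : ℂ) * q‖ := by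
        field_simp; try ring

/-- Lemma 5.1 (Appendix): an analytic self-map `F` of the upper half-plane with
`Im F(z) > Im z` satisfying `F(F(z)) - F(z) = F(z) - z` is a translation `z + a + ib`
with `b > 0`. -/
theorem fixed_point_translation (F : ℂ → ℂ)
    (hmap : ∀ z : ℂ, 0 < z.im → 0 < (F z).im)
    (hanal : AnalyticOn ℂ F {z : ℂ | 0 < z.im})
    (him : ∀ z : ℂ, 0 < z.im → z.im < (F z).im)
    (heq : ∀ z : ℂ, 0 < z.im → F (F z) - F z = F z - z) :
    ∃ (a b : ℝ), 0 < b ∧ ∀ z : ℂ, 0 < z.im → F z = z + a + b * Complex.I := by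
  set G : ℂ → ℂ := fun z => F z - z with hG
  have hGim : ∀ z : ℂ, 0 < z.im → 0 < (G z).im := by
    intro z hz
    have := him z hz
    simp only [hG, Complex.sub_im]
    linarith
  have hGd : DifferentiableOn ℂ G {z : ℂ | 0 < z.im} := by
    have h1 : DifferentiableOn ℂ F {z : ℂ | 0 < z.im} := hanal.differentiableOn
    exact h1.sub differentiableOn_id
  have hFx : ∀ x : ℂ, F x = x + G x := by intro x; simp only [hG]; ring
  have horbim : ∀ z : ℂ, 0 < z.im → ∀ n : ℕ, 0 < (z + (n:ℂ) * G z).im := by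
    intro z hz n
    have e : ((n:ℂ) * G z).im = (n:ℝ) * (G z).im := by
      simp [Complex.mul_im, Complex.natCast_re, Complex.natCast_im]
    simp only [Complex.add_im, e]
    have h3 : 0 ≤ (n:ℝ) * (G z).im := mul_nonneg (Nat.cast_nonneg n) (le_of_lt (hGim z hz))
    linarith
  have horb : ∀ z : ℂ, 0 < z.im → ∀ n : ℕ, G (z + (n:ℂ) * G z) = G z := by
    intro z hz n
    induction n with
    | zero => simp
    | succ n ih =>
      have hw : 0 < (z + (n:ℂ) * G z).im := horbim z hz n
      have hFw : F (z + (n:ℂ) * G z) = z + (n:ℂ) * G z + G z := by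
        rw [hFx, ih]
      have hGFw : G (F (z + (n:ℂ) * G z)) = G (z + (n:ℂ) * G z) := by
        simp only [hG]
        exact heq _ hw
      have e : z + ((n+1:ℕ):ℂ) * G z = F (z + (n:ℂ) * G z) := by
        rw [hFw]; push_cast; ring
      rw [e, hGFw, ih]
  have hkey : ∀ z : ℂ, 0 < z.im → ∀ w : ℂ, 0 < w.im →
      Complex.normSq (G z) = Complex.normSq (G w) := by
    intro z hz w hw
    apply normSq_eq_of_ineq (hGim z hz) (hGim w hw)
    intro t ht
    apply limit_ineq t ht
    intro k mk
    have hSP := halfplane_schwarz_pick hGd hGim (horbim z hz k) (horbim w hw mk)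
    rw [horb z hz k, horb w hw mk] at hSP
    have hc : conj (w + (mk:ℂ) * G w) = conj w + (mk:ℂ) * conj (G w) := by
      simp [map_add, map_mul, Complex.conj_natCast]
    rw [hc] at hSP
    exact hSP
  have hIU : Complex.I ∈ {z : ℂ | 0 < z.im} := by simp [Complex.I_im]
  have hnorm : ∀ z ∈ {z : ℂ | 0 < z.im}, ‖G z‖ = ‖G Complex.I‖ := by
    intro z hz
    rw [Complex.norm_def, Complex.norm_def,
      hkey z hz Complex.I (by simpa using hIU)]
  have hmax : IsMaxOn (norm ∘ G) {z : ℂ | 0 < z.im} Complex.I := by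
    apply isMaxOn_iff.mpr
    intro z hz
    simp only [Function.comp_apply]
    rw [hnorm z hz]
  have hopen : IsOpen {z : ℂ | 0 < z.im} := isOpen_lt continuous_const Complex.continuous_im
  have hpc : IsPreconnected {z : ℂ | 0 < z.im} :=
    (convex_halfSpace_im_gt 0).isPreconnected
  have heqon := Complex.eqOn_of_isPreconnected_of_isMaxOn_norm hpc hopen hGd hIU hmax
  refine ⟨(G Complex.I).re, (G Complex.I).im, hGim Complex.I (by simpa using hIU), ?_⟩
  intro z hz
  have h1 : G z = G Complex.I := heqon hz
  rw [hFx z, h1, add_assoc]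
  congr 1
  exact (Complex.re_add_im _).symm
end

section
/- Fix θ ∈ [0, π] and set φ(x) = (sin θ)/2 − (1/√2) · [ (x² + (cos θ/2)x + 1/16)^{1/2} − x cos θ − (cos 2θ)/4 ]^{1/2} for x ∈ ℝ. Then φ(x) ≤ 0 for all x ∈ ℝ, with maximum value φ(0) = 0. -/
open Real

/-- The imaginary part of the Voiculescu transform of a Boolean strictly `1/2`-stable law:
`φ(x) = sinθ/2 − (1/√2)·√(√(x² + (cosθ/2)x + 1/16) − x cosθ − (cos 2θ)/4)` is
nonpositive on `ℝ`, with maximum value `φ(0) = 0`. -/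
theorem boolean_half_stable_im_nonpos (θ : ℝ) (hθ0 : 0 ≤ θ) (hθπ : θ ≤ π) :
    let φ : ℝ → ℝ := fun x =>
      Real.sin θ / 2 - (1 / Real.sqrt 2) *
        Real.sqrt (Real.sqrt (x ^ 2 + (Real.cos θ / 2) * x + 1 / 16)
          - x * Real.cos θ - Real.cos (2 * θ) / 4)
    (∀ x : ℝ, φ x ≤ 0) ∧ φ 0 = 0 := by
  intro φ
  have hsin : 0 ≤ Real.sin θ := Real.sin_nonneg_of_nonneg_of_le_pi hθ0 hθπ
  have hc2 : Real.cos (2 * θ) = 1 - 2 * Real.sin θ ^ 2 := by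
    have := Real.sin_sq_add_cos_sq θ
    rw [Real.cos_two_mul]; linarith
  have heq : (1 / Real.sqrt 2) * Real.sqrt (Real.sin θ ^ 2 / 2) = Real.sin θ / 2 := by
    rw [Real.sqrt_div (sq_nonneg _), Real.sqrt_sq hsin]
    have h2 : Real.sqrt 2 * Real.sqrt 2 = 2 := Real.mul_self_sqrt (by norm_num)
    have h2' : Real.sqrt 2 ≠ 0 := by positivity
    field_simp
    rw [Real.sq_sqrt (by norm_num : (0:ℝ) ≤ 2)]; ring
  constructor
  · intro x
    have h1 : x * Real.cos θ + 1 / 4 ≤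
        Real.sqrt (x ^ 2 + (Real.cos θ / 2) * x + 1 / 16) := by
      calc x * Real.cos θ + 1 / 4 ≤ |x * Real.cos θ + 1 / 4| := le_abs_self _
        _ = Real.sqrt ((x * Real.cos θ + 1 / 4) ^ 2) := (Real.sqrt_sq_eq_abs _).symm
        _ ≤ Real.sqrt (x ^ 2 + (Real.cos θ / 2) * x + 1 / 16) := by
            apply Real.sqrt_le_sqrt
            have hc : Real.cos θ ^ 2 ≤ 1 := Real.cos_sq_le_one θ
            nlinarith [sq_nonneg x]
    have h2 : Real.sin θ ^ 2 / 2 ≤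
        Real.sqrt (x ^ 2 + (Real.cos θ / 2) * x + 1 / 16)
          - x * Real.cos θ - Real.cos (2 * θ) / 4 := by
      rw [hc2]; linarith
    have h3 : Real.sqrt (Real.sin θ ^ 2 / 2) ≤
        Real.sqrt (Real.sqrt (x ^ 2 + (Real.cos θ / 2) * x + 1 / 16)
          - x * Real.cos θ - Real.cos (2 * θ) / 4) := Real.sqrt_le_sqrt h2
    have hpos : (0:ℝ) ≤ 1 / Real.sqrt 2 := by positivity
    have := mul_le_mul_of_nonneg_left h3 hpos
    simp only [φ]
    linarith [heq ▸ this]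
  · simp only [φ]
    have h116 : Real.sqrt ((0:ℝ) ^ 2 + (Real.cos θ / 2) * 0 + 1 / 16) = 1 / 4 := by
      rw [show (0:ℝ) ^ 2 + (Real.cos θ / 2) * 0 + 1 / 16 = (1/4 : ℝ)^2 by norm_num]
      exact Real.sqrt_sq (by norm_num)
    rw [h116]
    have : (1:ℝ) / 4 - 0 * Real.cos θ - Real.cos (2 * θ) / 4 = Real.sin θ ^ 2 / 2 := by
      rw [hc2]; ring
    rw [this, heq]
    ring
end

section
/- Let μ be a probability measure on ℝ with finite fourth moment, nonzero variance γ₀, and Jacobi parameters β₀, β₁, γ₀, γ₁ (obtained by orthogonalizing 1, x, x² in L²(μ)). For t > 0, the Boolean power μ^{⊎t} has Jacobi parameters (tβ₀, β₁; tγ₀, γ₁), i.e. its first four moments are those of a measure with Jacobi parameters β₀ replaced by tβ₀ and γ₀ replaced by tγ₀. -/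
open MeasureTheory Complex

/-- The reciprocal Cauchy transform `F_μ(z) = 1 / ∫ (z − x)⁻¹ dμ(x)`. -/
noncomputable def cauchyF (μ : Measure ℝ) (z : ℂ) : ℂ :=
  (∫ x : ℝ, (z - (x : ℂ))⁻¹ ∂μ)⁻¹

/-- First Jacobi parameter `β₀` (the mean). -/
noncomputable def jacobiB0 (μ : Measure ℝ) : ℝ := ∫ x, x ∂μ

/-- Jacobi parameter `γ₀ = ∫ (x − β₀)² dμ` (the variance). -/
noncomputable def jacobiG0 (μ : Measure ℝ) : ℝ := ∫ x, (x - jacobiB0 μ) ^ 2 ∂μ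

/-- Jacobi parameter `β₁ = γ₀⁻¹ ∫ x (x − β₀)² dμ`. -/
noncomputable def jacobiB1 (μ : Measure ℝ) : ℝ :=
  (∫ x, x * (x - jacobiB0 μ) ^ 2 ∂μ) / jacobiG0 μ

/-- Jacobi parameter `γ₁ = γ₀⁻¹ ∫ |P₂(x)|² dμ`, `P₂(x) = (x−β₀)(x−β₁) − γ₀`. -/
noncomputable def jacobiG1 (μ : Measure ℝ) : ℝ :=
  (∫ x, ((x - jacobiB0 μ) * (x - jacobiB1 μ) - jacobiG0 μ) ^ 2 ∂μ) / jacobiG0 μ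

open Filter Topology


noncomputable def mom (μ : Measure ℝ) (k : ℕ) : ℝ := ∫ x, x ^ k ∂μ

lemma integrable_pow_le (μ : Measure ℝ) [IsProbabilityMeasure μ]
    (h4 : Integrable (fun x : ℝ => x ^ 4) μ) (k : ℕ) (hk : k ≤ 4) :
    Integrable (fun x : ℝ => x ^ k) μ := by
  refine ((integrable_const (1:ℝ)).add h4).mono'
    ((continuous_pow k).aestronglyMeasurable) ?_
  filter_upwards with x
  have hx4 : (0:ℝ) ≤ x ^ 4 := by positivity
  have hn : ‖x ^ k‖ = |x| ^ k := by rw [Real.norm_eq_abs, _root_.abs_pow]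
  have key : |x| ^ k ≤ 1 + x ^ 4 := by
    rcases le_or_gt |x| 1 with h | h
    · have : |x| ^ k ≤ 1 := pow_le_one₀ (abs_nonneg x) h
      linarith
    · have h1 : |x| ^ k ≤ |x| ^ 4 := pow_le_pow_right₀ h.le hk
      have h2 : |x| ^ 4 = x ^ 4 := by rw [← _root_.abs_pow]; exact _root_.abs_of_nonneg hx4
      linarith
  simpa [hn] using key

lemma integral_poly4 (μ : Measure ℝ) [IsProbabilityMeasure μ]
    (h4 : Integrable (fun x : ℝ => x ^ 4) μ) (a0 a1 a2 a3 a4 : ℝ) :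
    ∫ x, (a0 + a1*x + a2*x^2 + a3*x^3 + a4*x^4) ∂μ
      = a0 + a1 * mom μ 1 + a2 * mom μ 2 + a3 * mom μ 3 + a4 * mom μ 4 := by
  have i1 : Integrable (fun x : ℝ => x) μ := by
    simpa using integrable_pow_le μ h4 1 (by norm_num)
  have i2 := integrable_pow_le μ h4 2 (by norm_num)
  have i3 := integrable_pow_le μ h4 3 (by norm_num)
  have I0 : Integrable (fun _ : ℝ => a0) μ := integrable_const _
  have I1 : Integrable (fun x : ℝ => a1*x) μ := i1.const_mul _
  have I2 : Integrable (fun x : ℝ => a2*x^2) μ := i2.const_mul _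
  have I3 : Integrable (fun x : ℝ => a3*x^3) μ := i3.const_mul _
  have I4 : Integrable (fun x : ℝ => a4*x^4) μ := h4.const_mul _
  have H1 : Integrable (fun x : ℝ => a0 + a1*x) μ := I0.add I1
  have H2 : Integrable (fun x : ℝ => a0 + a1*x + a2*x^2) μ := H1.add I2
  have H3 : Integrable (fun x : ℝ => a0 + a1*x + a2*x^2 + a3*x^3) μ := H2.add I3
  rw [integral_add H3 I4, integral_add H2 I3, integral_add H1 I2, integral_add I0 I1,
    integral_const_mul, integral_const_mul, integral_const_mul, integral_const_mul]
  simp [mom, pow_one]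


noncomputable def cg (μ : Measure ℝ) (z : ℂ) : ℂ := ∫ x, (z - (x:ℂ))⁻¹ ∂μ

lemma sub_ofReal_ne (z : ℂ) (hz : z.im ≠ 0) (x : ℝ) : z - (x:ℂ) ≠ 0 := by
  intro h
  apply hz
  have := congrArg Complex.im h
  simpa using this

lemma integrable_inv (μ : Measure ℝ) [IsProbabilityMeasure μ] {z : ℂ} (hz : 0 < z.im) :
    Integrable (fun x : ℝ => (z - (x:ℂ))⁻¹) μ := by
  have hne := sub_ofReal_ne z hz.ne'
  refine (integrable_const ((z.im)⁻¹)).mono'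
    (((continuous_const.sub Complex.continuous_ofReal).inv₀ hne).aestronglyMeasurable) ?_
  filter_upwards with x
  rw [norm_inv]
  have h1 : z.im ≤ ‖z - (x:ℂ)‖ := by
    calc z.im = (z - (x:ℂ)).im := by simp
    _ ≤ |(z - (x:ℂ)).im| := le_abs_self _
    _ ≤ ‖z - (x:ℂ)‖ := by exact Complex.abs_im_le_norm _
  exact inv_anti₀ hz h1

lemma cg_im_neg (μ : Measure ℝ) [IsProbabilityMeasure μ] {z : ℂ} (hz : 0 < z.im) :
    (cg μ z).im < 0 := by
  have hne := sub_ofReal_ne z hz.ne'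
  have hint := integrable_inv μ hz
  have hpos : ∀ x : ℝ, 0 < z.im / Complex.normSq (z - (x:ℂ)) := fun x =>
    div_pos hz (Complex.normSq_pos.mpr (hne x))
  have hintf : Integrable (fun x : ℝ => z.im / Complex.normSq (z - (x:ℂ))) μ := by
    refine (integrable_const (z.im / z.im^2)).mono'
      ((continuous_const.div ((Complex.continuous_normSq).comp
        (continuous_const.sub Complex.continuous_ofReal))
        (fun x => (Complex.normSq_pos.mpr (hne x)).ne')).aestronglyMeasurable) ?_
    filter_upwards with x
    rw [Real.norm_eq_abs, _root_.abs_of_nonneg (hpos x).le]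
    have hsq : z.im^2 ≤ Complex.normSq (z - (x:ℂ)) := by
      rw [Complex.normSq_apply]
      have : (z - (x:ℂ)).im = z.im := by simp
      nlinarith [sq_nonneg (z - (x:ℂ)).re, this]
    gcongr
  have him : (cg μ z).im = ∫ x, ((z - (x:ℂ))⁻¹).im ∂μ := (integral_im hint).symm
  rw [him]
  have heq : (fun x : ℝ => ((z - (x:ℂ))⁻¹).im)
      = fun x : ℝ => -(z.im / Complex.normSq (z - (x:ℂ))) := by
    funext x
    rw [Complex.inv_im]
    simp [neg_div]
  rw [heq, integral_neg, neg_lt, neg_zero]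
  rw [integral_pos_iff_support_of_nonneg (fun x => (hpos x).le) hintf]
  have : Function.support (fun x : ℝ => z.im / Complex.normSq (z - (x:ℂ))) = Set.univ :=
    Set.eq_univ_of_forall (fun x => (hpos x).ne')
  rw [this]
  simp

lemma cg_ne_zero (μ : Measure ℝ) [IsProbabilityMeasure μ] {z : ℂ} (hz : 0 < z.im) :
    cg μ z ≠ 0 := by
  intro h
  have := cg_im_neg μ hz
  rw [h] at this
  simp at this

lemma integrable_cpow_mul (μ : Measure ℝ) [IsProbabilityMeasure μ]
    (h4 : Integrable (fun x : ℝ => x ^ 4) μ) (k : ℕ) (hk : k ≤ 4) (c : ℂ) :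
    Integrable (fun x : ℝ => ((x:ℂ))^k * c) μ := by
  have h1 : (fun x : ℝ => ((x:ℂ))^k * c) = fun x : ℝ => ((x^k : ℝ) : ℂ) * c := by
    funext x; push_cast; ring
  rw [h1]
  exact ((integrable_pow_le μ h4 k hk).ofReal).mul_const c

lemma integral_cpow_mul (μ : Measure ℝ) [IsProbabilityMeasure μ]
    (h4 : Integrable (fun x : ℝ => x ^ 4) μ) (k : ℕ) (hk : k ≤ 4) (c : ℂ) :
    ∫ x : ℝ, ((x:ℂ))^k * c ∂μ = (mom μ k : ℂ) * c := by
  have h1 : (fun x : ℝ => ((x:ℂ))^k * c) = fun x : ℝ => ((x^k : ℝ) : ℂ) * c := by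
    funext x; push_cast; ring
  rw [h1, integral_mul_const]
  have h2 : ∫ x : ℝ, ((x^k : ℝ) : ℂ) ∂μ = ((mom μ k : ℝ) : ℂ) := integral_ofReal
  rw [h2]

lemma integrable_rem (μ : Measure ℝ) [IsProbabilityMeasure μ]
    (h4 : Integrable (fun x : ℝ => x ^ 4) μ) {z : ℂ} (hre : z.re = 0) (hz : z.im ≠ 0) :
    Integrable (fun x : ℝ => ((x:ℂ))^5 * (z - (x:ℂ))⁻¹) μ := by
  have hne := sub_ofReal_ne z hz
  refine h4.mono' (((Complex.continuous_ofReal.pow 5).mul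
    ((continuous_const.sub Complex.continuous_ofReal).inv₀ hne)).aestronglyMeasurable) ?_
  filter_upwards with x
  rcases eq_or_ne x 0 with rfl | hx
  · simp
  · have habs : |x| ≤ ‖z - (x:ℂ)‖ := by
      calc |x| = |(z - (x:ℂ)).re| := by rw [Complex.sub_re, hre, Complex.ofReal_re]; simp
      _ ≤ ‖z - (x:ℂ)‖ := by exact Complex.abs_re_le_norm _
    have hxpos : (0:ℝ) < |x| := abs_pos.mpr hx
    calc ‖((x:ℂ))^5 * (z - (x:ℂ))⁻¹‖ = |x|^5 * ‖z - (x:ℂ)‖⁻¹ := by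
          rw [norm_mul, norm_pow, norm_inv, Complex.norm_real, Real.norm_eq_abs]
    _ ≤ |x|^5 * |x|⁻¹ := by gcongr
    _ = |x|^4 := by field_simp
    _ = x^4 := by rw [← _root_.abs_pow]; exact _root_.abs_of_nonneg (by positivity)

lemma cg_expand (μ : Measure ℝ) [IsProbabilityMeasure μ]
    (h4 : Integrable (fun x : ℝ => x ^ 4) μ) (y : ℝ) (hy : 0 < y) :
    ((I:ℂ)*y)^5 * cg μ ((I:ℂ)*y)
      = (((I:ℂ)*y)^4 + (mom μ 1 : ℂ)*((I:ℂ)*y)^3 + (mom μ 2 : ℂ)*((I:ℂ)*y)^2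
          + (mom μ 3 : ℂ)*((I:ℂ)*y) + (mom μ 4 : ℂ))
        + ∫ x : ℝ, ((x:ℂ))^5 * (((I:ℂ)*y) - (x:ℂ))⁻¹ ∂μ := by
  set z : ℂ := (I:ℂ)*y with hzdef
  have hzim : z.im = y := by simp [hzdef]
  have hzre : z.re = 0 := by simp [hzdef]
  have hne := sub_ofReal_ne z (by rw [hzim]; exact hy.ne')
  have hrem := integrable_rem μ h4 hzre (by rw [hzim]; exact hy.ne')
  have J0 : Integrable (fun x : ℝ => ((x:ℂ))^0 * z^4) μ := integrable_cpow_mul μ h4 0 (by norm_num) _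
  have J1 : Integrable (fun x : ℝ => ((x:ℂ))^1 * z^3) μ := integrable_cpow_mul μ h4 1 (by norm_num) _
  have J2 : Integrable (fun x : ℝ => ((x:ℂ))^2 * z^2) μ := integrable_cpow_mul μ h4 2 (by norm_num) _
  have J3 : Integrable (fun x : ℝ => ((x:ℂ))^3 * z^1) μ := integrable_cpow_mul μ h4 3 (by norm_num) _
  have J4 : Integrable (fun x : ℝ => ((x:ℂ))^4 * z^0) μ := integrable_cpow_mul μ h4 4 (by norm_num) _
  have hpt : ∀ x : ℝ, z^5 * (z - (x:ℂ))⁻¹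
      = (((x:ℂ))^0*z^4 + ((x:ℂ))^1*z^3 + ((x:ℂ))^2*z^2 + ((x:ℂ))^3*z^1 + ((x:ℂ))^4*z^0)
        + ((x:ℂ))^5 * (z - (x:ℂ))⁻¹ := by
    intro x
    field_simp [hne x]
    ring
  have H1 : Integrable (fun x : ℝ => ((x:ℂ))^0*z^4 + ((x:ℂ))^1*z^3) μ := J0.add J1
  have H2 : Integrable (fun x : ℝ => ((x:ℂ))^0*z^4 + ((x:ℂ))^1*z^3 + ((x:ℂ))^2*z^2) μ := H1.add J2
  have H3 : Integrable (fun x : ℝ => ((x:ℂ))^0*z^4 + ((x:ℂ))^1*z^3 + ((x:ℂ))^2*z^2 + ((x:ℂ))^3*z^1) μ := H2.add J3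
  have H4 : Integrable (fun x : ℝ => ((x:ℂ))^0*z^4 + ((x:ℂ))^1*z^3 + ((x:ℂ))^2*z^2 + ((x:ℂ))^3*z^1 + ((x:ℂ))^4*z^0) μ := H3.add J4
  calc z^5 * cg μ z = ∫ x : ℝ, z^5 * (z - (x:ℂ))⁻¹ ∂μ := (integral_const_mul _ _).symm
  _ = ∫ x : ℝ, ((((x:ℂ))^0*z^4 + ((x:ℂ))^1*z^3 + ((x:ℂ))^2*z^2 + ((x:ℂ))^3*z^1 + ((x:ℂ))^4*z^0)
        + ((x:ℂ))^5 * (z - (x:ℂ))⁻¹) ∂μ := integral_congr_ae (ae_of_all _ hpt)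
  _ = (∫ x : ℝ, (((x:ℂ))^0*z^4 + ((x:ℂ))^1*z^3 + ((x:ℂ))^2*z^2 + ((x:ℂ))^3*z^1 + ((x:ℂ))^4*z^0) ∂μ)
        + ∫ x : ℝ, ((x:ℂ))^5 * (z - (x:ℂ))⁻¹ ∂μ := integral_add H4 hrem
  _ = _ := by
    rw [integral_add H3 J4, integral_add H2 J3, integral_add H1 J2, integral_add J0 J1,
      integral_cpow_mul μ h4 0 (by norm_num), integral_cpow_mul μ h4 1 (by norm_num),
      integral_cpow_mul μ h4 2 (by norm_num), integral_cpow_mul μ h4 3 (by norm_num),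
      integral_cpow_mul μ h4 4 (by norm_num)]
    have hm0 : mom μ 0 = 1 := by simp [mom]
    rw [hm0]
    push_cast
    ring

lemma rem_tendsto (μ : Measure ℝ) [IsProbabilityMeasure μ]
    (h4 : Integrable (fun x : ℝ => x ^ 4) μ) :
    Tendsto (fun y : ℝ => ∫ x : ℝ, ((x:ℂ))^5 * (((I:ℂ)*y) - (x:ℂ))⁻¹ ∂μ) atTop (𝓝 0) := by
  have h0 : Tendsto (fun y : ℝ => ∫ x : ℝ, ((x:ℂ))^5 * (((I:ℂ)*y) - (x:ℂ))⁻¹ ∂μ)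
      atTop (𝓝 (∫ x : ℝ, (0:ℂ) ∂μ)) := by
    apply tendsto_integral_filter_of_dominated_convergence (fun x : ℝ => x^4)
    · filter_upwards [eventually_gt_atTop (0:ℝ)] with y hy
      have hne := sub_ofReal_ne ((I:ℂ)*y) (by simp [hy.ne'])
      exact ((Complex.continuous_ofReal.pow 5).mul
        ((continuous_const.sub Complex.continuous_ofReal).inv₀ hne)).aestronglyMeasurable
    · filter_upwards with y
      filter_upwards with x
      rcases eq_or_ne x 0 with rfl | hx
      · simp
      · have habs : |x| ≤ ‖((I:ℂ)*y) - (x:ℂ)‖ := by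
          calc |x| = |(((I:ℂ)*y) - (x:ℂ)).re| := by simp
          _ ≤ ‖((I:ℂ)*y) - (x:ℂ)‖ := by
              exact Complex.abs_re_le_norm _
        have hxpos : (0:ℝ) < |x| := abs_pos.mpr hx
        calc ‖((x:ℂ))^5 * (((I:ℂ)*y) - (x:ℂ))⁻¹‖ = |x|^5 * ‖((I:ℂ)*y) - (x:ℂ)‖⁻¹ := by
              rw [norm_mul, norm_pow, norm_inv, Complex.norm_real, Real.norm_eq_abs]
        _ ≤ |x|^5 * |x|⁻¹ := by gcongr
        _ = |x|^4 := by field_simp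
        _ = x^4 := by rw [← _root_.abs_pow]; exact _root_.abs_of_nonneg (by positivity)
    · exact h4
    · filter_upwards with x
      apply squeeze_zero_norm' (a := fun y : ℝ => |x|^5 * y⁻¹)
      · filter_upwards [eventually_gt_atTop (0:ℝ)] with y hy
        have him : y ≤ ‖((I:ℂ)*y) - (x:ℂ)‖ := by
          calc y = |(((I:ℂ)*y) - (x:ℂ)).im| := by simp [_root_.abs_of_nonneg hy.le]
          _ ≤ ‖((I:ℂ)*y) - (x:ℂ)‖ := by
              exact Complex.abs_im_le_norm _
        calc ‖((x:ℂ))^5 * (((I:ℂ)*y) - (x:ℂ))⁻¹‖ = |x|^5 * ‖((I:ℂ)*y) - (x:ℂ)‖⁻¹ := by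
              rw [norm_mul, norm_pow, norm_inv, Complex.norm_real, Real.norm_eq_abs]
        _ ≤ |x|^5 * y⁻¹ := by gcongr
      · simpa using tendsto_inv_atTop_zero.const_mul (|x|^5)
  simpa using h0


lemma Iy_inv_tendsto : Tendsto (fun y : ℝ => ((I:ℂ)*y)⁻¹) atTop (𝓝 0) := by
  rw [tendsto_zero_iff_norm_tendsto_zero]
  apply squeeze_zero_norm' (a := fun y : ℝ => y⁻¹)
  · filter_upwards [eventually_gt_atTop (0:ℝ)] with y hy
    have h1 : ‖(((I:ℂ)*y)⁻¹)‖ = y⁻¹ := by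
      rw [norm_inv, norm_mul, Complex.norm_I, Complex.norm_real, Real.norm_eq_abs,
        one_mul, _root_.abs_of_nonneg hy.le]
    rw [h1, Real.norm_eq_abs, _root_.abs_of_nonneg (by positivity : (0:ℝ) ≤ y⁻¹)]
  · exact tendsto_inv_atTop_zero

lemma coeff_zero (a b c d : ℂ)
    (h : Tendsto (fun y : ℝ => a*((I:ℂ)*y)^3 + b*((I:ℂ)*y)^2 + c*((I:ℂ)*y) + d)
      atTop (𝓝 0)) : a = 0 ∧ b = 0 ∧ c = 0 ∧ d = 0 := by
  have hinv := Iy_inv_tendsto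
  have hz : ∀ y : ℝ, 0 < y → ((I:ℂ)*y) ≠ 0 := fun y hy =>
    mul_ne_zero Complex.I_ne_zero (by exact_mod_cast hy.ne')
  have ha : a = 0 := by
    have hB : Tendsto (fun y : ℝ =>
        (a*((I:ℂ)*y)^3 + b*((I:ℂ)*y)^2 + c*((I:ℂ)*y) + d) * (((I:ℂ)*y)⁻¹)^3)
        atTop (𝓝 0) := by simpa using h.mul (hinv.pow 3)
    have hA : Tendsto (fun y : ℝ =>
        a + b*((I:ℂ)*y)⁻¹ + c*(((I:ℂ)*y)⁻¹)^2 + d*(((I:ℂ)*y)⁻¹)^3) atTop (𝓝 a) := by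
      have := (((tendsto_const_nhds (x := a)).add (hinv.const_mul b)).add
        ((hinv.pow 2).const_mul c)).add ((hinv.pow 3).const_mul d)
      simpa using this
    have heq : (fun y : ℝ =>
        (a*((I:ℂ)*y)^3 + b*((I:ℂ)*y)^2 + c*((I:ℂ)*y) + d) * (((I:ℂ)*y)⁻¹)^3)
        =ᶠ[atTop] (fun y : ℝ =>
        a + b*((I:ℂ)*y)⁻¹ + c*(((I:ℂ)*y)⁻¹)^2 + d*(((I:ℂ)*y)⁻¹)^3) := by
      filter_upwards [eventually_gt_atTop (0:ℝ)] with y hy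
      linear_combination (a*(((I:ℂ)*y)^2*((I:ℂ)*y)⁻¹^2 + ((I:ℂ)*y)*((I:ℂ)*y)⁻¹ + 1) + b*((I:ℂ)*y)⁻¹*(((I:ℂ)*y)*((I:ℂ)*y)⁻¹ + 1) + c*((I:ℂ)*y)⁻¹^2) * mul_inv_cancel₀ (hz y hy)
      try ring
    exact tendsto_nhds_unique hA (hB.congr' heq)
  subst ha
  have h3 : Tendsto (fun y : ℝ => b*((I:ℂ)*y)^2 + c*((I:ℂ)*y) + d) atTop (𝓝 0) := by
    simpa using h
  have hb : b = 0 := by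
    have hB : Tendsto (fun y : ℝ =>
        (b*((I:ℂ)*y)^2 + c*((I:ℂ)*y) + d) * (((I:ℂ)*y)⁻¹)^2)
        atTop (𝓝 0) := by simpa using h3.mul (hinv.pow 2)
    have hA : Tendsto (fun y : ℝ =>
        b + c*((I:ℂ)*y)⁻¹ + d*(((I:ℂ)*y)⁻¹)^2) atTop (𝓝 b) := by
      have := ((tendsto_const_nhds (x := b)).add (hinv.const_mul c)).add
        ((hinv.pow 2).const_mul d)
      simpa using this
    have heq : (fun y : ℝ =>
        (b*((I:ℂ)*y)^2 + c*((I:ℂ)*y) + d) * (((I:ℂ)*y)⁻¹)^2)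
        =ᶠ[atTop] (fun y : ℝ => b + c*((I:ℂ)*y)⁻¹ + d*(((I:ℂ)*y)⁻¹)^2) := by
      filter_upwards [eventually_gt_atTop (0:ℝ)] with y hy
      linear_combination (b*(((I:ℂ)*y)*((I:ℂ)*y)⁻¹ + 1) + c*((I:ℂ)*y)⁻¹) * mul_inv_cancel₀ (hz y hy)
      try ring
    exact tendsto_nhds_unique hA (hB.congr' heq)
  subst hb
  have h2 : Tendsto (fun y : ℝ => c*((I:ℂ)*y) + d) atTop (𝓝 0) := by simpa using h3
  have hc : c = 0 := by
    have hB : Tendsto (fun y : ℝ => (c*((I:ℂ)*y) + d) * ((I:ℂ)*y)⁻¹)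
        atTop (𝓝 0) := by simpa using h2.mul hinv
    have hA : Tendsto (fun y : ℝ => c + d*((I:ℂ)*y)⁻¹) atTop (𝓝 c) := by
      have := (tendsto_const_nhds (x := c)).add (hinv.const_mul d)
      simpa using this
    have heq : (fun y : ℝ => (c*((I:ℂ)*y) + d) * ((I:ℂ)*y)⁻¹)
        =ᶠ[atTop] (fun y : ℝ => c + d*((I:ℂ)*y)⁻¹) := by
      filter_upwards [eventually_gt_atTop (0:ℝ)] with y hy
      linear_combination c * mul_inv_cancel₀ (hz y hy)
      try ring
    exact tendsto_nhds_unique hA (hB.congr' heq)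
  subst hc
  have h1 : Tendsto (fun _ : ℝ => d) atTop (𝓝 0) := by simpa using h2
  exact ⟨rfl, rfl, rfl, tendsto_nhds_unique tendsto_const_nhds h1⟩

lemma integral_quartic_eq (μ : Measure ℝ) [IsProbabilityMeasure μ]
    (h4 : Integrable (fun x : ℝ => x ^ 4) μ) (f : ℝ → ℝ) (a0 a1 a2 a3 a4 : ℝ)
    (hf : ∀ x, f x = a0 + a1*x + a2*x^2 + a3*x^3 + a4*x^4) :
    ∫ x, f x ∂μ = a0 + a1 * mom μ 1 + a2 * mom μ 2 + a3 * mom μ 3 + a4 * mom μ 4 := by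
  rw [show f = (fun x => a0 + a1*x + a2*x^2 + a3*x^3 + a4*x^4) from funext hf]
  exact integral_poly4 μ h4 a0 a1 a2 a3 a4

lemma jacobiB0_eq (μ : Measure ℝ) : jacobiB0 μ = mom μ 1 := by
  simp [jacobiB0, mom]

/-- If `ν = μ^{⊎t}` is the Boolean power, i.e. `F_ν = t F_μ + (1−t) id`, then the
Jacobi parameters of `ν` are `(tβ₀, β₁; tγ₀, γ₁)`. -/
theorem boolean_power_jacobi (μ ν : Measure ℝ)
    [IsProbabilityMeasure μ] [IsProbabilityMeasure ν]
    (h4μ : Integrable (fun x : ℝ => x ^ 4) μ)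
    (h4ν : Integrable (fun x : ℝ => x ^ 4) ν)
    (hγ0 : jacobiG0 μ ≠ 0) (t : ℝ) (ht : 0 < t)
    (hboole : ∀ z : ℂ, 0 < z.im →
      cauchyF ν z = (t : ℂ) * cauchyF μ z + (1 - (t : ℂ)) * z) :
    jacobiB0 ν = t * jacobiB0 μ ∧ jacobiG0 ν = t * jacobiG0 μ ∧
      jacobiB1 ν = jacobiB1 μ ∧ jacobiG1 ν = jacobiG1 μ := by
  set m1 := mom μ 1 with hm1def
  set m2 := mom μ 2 with hm2def
  set m3 := mom μ 3 with hm3def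
  set m4 := mom μ 4 with hm4def
  set n1 := mom ν 1 with hn1def
  set n2 := mom ν 2 with hn2def
  set n3 := mom ν 3 with hn3def
  set n4 := mom ν 4 with hn4def
  have key : Tendsto (fun y : ℝ =>
      ((t*m1 - n1 : ℝ) : ℂ)*((I:ℂ)*y)^3 + ((t*m2 - n2 - (1-t)*m1*n1 : ℝ) : ℂ)*((I:ℂ)*y)^2 + ((t*m3 - n3 - (1-t)*(m1*n2 + m2*n1) : ℝ) : ℂ)*((I:ℂ)*y) + ((t*m4 - n4 - (1-t)*(m1*n3 + m2*n2 + m3*n1) : ℝ) : ℂ)) atTop (𝓝 0) := by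
    have hw := Iy_inv_tendsto
    have hDm : Tendsto (fun y : ℝ => (∫ x : ℝ, ((x:ℂ))^5 * (((I:ℂ)*y) - (x:ℂ))⁻¹ ∂μ)) atTop (𝓝 0) := rem_tendsto μ h4μ
    have hDn : Tendsto (fun y : ℝ => (∫ x : ℝ, ((x:ℂ))^5 * (((I:ℂ)*y) - (x:ℂ))⁻¹ ∂ν)) atTop (𝓝 0) := rem_tendsto ν h4ν
    have hzw1 : Tendsto (fun y : ℝ => (((I:ℂ)*y) * ((I:ℂ)*y)⁻¹)) atTop (𝓝 1) := by
      refine tendsto_const_nhds.congr' ?_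
      filter_upwards [eventually_gt_atTop (0:ℝ)] with y hy
      have hz : ((I:ℂ)*y) ≠ 0 :=
        mul_ne_zero Complex.I_ne_zero (Complex.ofReal_ne_zero.mpr hy.ne')
      exact (mul_inv_cancel₀ hz).symm
    have hN : Tendsto (fun y : ℝ => -((((I:ℂ)*y) * ((I:ℂ)*y)⁻¹)^4 * ((∫ x : ℝ, ((x:ℂ))^5 * (((I:ℂ)*y) - (x:ℂ))⁻¹ ∂μ) - (t:ℂ)*(∫ x : ℝ, ((x:ℂ))^5 * (((I:ℂ)*y) - (x:ℂ))⁻¹ ∂ν))) + ((1:ℂ)-(t:ℂ)) * (((((I:ℂ)*y) * ((I:ℂ)*y)⁻¹)^4 + (m1:ℂ)*((((I:ℂ)*y) * ((I:ℂ)*y)⁻¹)^3*(((I:ℂ)*y)⁻¹)) + (m2:ℂ)*((((I:ℂ)*y) * ((I:ℂ)*y)⁻¹)^2*(((I:ℂ)*y)⁻¹)^2) + (m3:ℂ)*((((I:ℂ)*y) * ((I:ℂ)*y)⁻¹)*(((I:ℂ)*y)⁻¹)^3) + (m4:ℂ)*(((I:ℂ)*y)⁻¹)^4) * (∫ x : ℝ,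 ((x:ℂ))^5 * (((I:ℂ)*y) - (x:ℂ))⁻¹ ∂ν) + ((((I:ℂ)*y) * ((I:ℂ)*y)⁻¹)^4 + (n1:ℂ)*((((I:ℂ)*y) * ((I:ℂ)*y)⁻¹)^3*(((I:ℂ)*y)⁻¹)) + (n2:ℂ)*((((I:ℂ)*y) * ((I:ℂ)*y)⁻¹)^2*(((I:ℂ)*y)⁻¹)^2) + (n3:ℂ)*((((I:ℂ)*y) * ((I:ℂ)*y)⁻¹)*(((I:ℂ)*y)⁻¹)^3) + (n4:ℂ)*(((I:ℂ)*y)⁻¹)^4) * (∫ x : ℝ, ((x:ℂ))^5 * (((I:ℂ)*y) - (x:ℂ))⁻¹ ∂μ) + (∫ x : ℝ, ((x:ℂ))^5 * (((I:ℂ)*y) - (x:ℂ))⁻¹ ∂μ) * ((∫ x : ℝ, ((x:ℂ))^5 * (((I:ℂ)*y) - (x:ℂ))⁻¹ ∂ν) * (((I:ℂ)*y)⁻¹)^4)) + ((1:ℂ)-(t:ℂ)) * (((m1*n4 + m2*n3 + m3*n2 + m4*n1 : ℝ) : ℂ)*((((I:ℂ)*y) * ((I:ℂ)*y)⁻¹)^3*(((I:ℂ)*y)⁻¹))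 + ((m2*n4 + m3*n3 + m4*n2 : ℝ) : ℂ)*((((I:ℂ)*y) * ((I:ℂ)*y)⁻¹)^2*(((I:ℂ)*y)⁻¹)^2) + ((m3*n4 + m4*n3 : ℝ) : ℂ)*((((I:ℂ)*y) * ((I:ℂ)*y)⁻¹)*(((I:ℂ)*y)⁻¹)^3) + ((m4*n4 : ℝ) : ℂ)*(((I:ℂ)*y)⁻¹)^4)) atTop (𝓝 0) := by
      have p1 := ((hzw1.pow 4).mul (hDm.sub (hDn.const_mul (t:ℂ)))).neg
      have pmlim := (((((hzw1.pow 4)).add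
        (((hzw1.pow 3).mul hw).const_mul ((m1:ℝ):ℂ))).add
        (((hzw1.pow 2).mul (hw.pow 2)).const_mul ((m2:ℝ):ℂ))).add
        ((hzw1.mul (hw.pow 3)).const_mul ((m3:ℝ):ℂ))).add
        ((hw.pow 4).const_mul ((m4:ℝ):ℂ))
      have pnlim := (((((hzw1.pow 4)).add
        (((hzw1.pow 3).mul hw).const_mul ((n1:ℝ):ℂ))).add
        (((hzw1.pow 2).mul (hw.pow 2)).const_mul ((n2:ℝ):ℂ))).add
        ((hzw1.mul (hw.pow 3)).const_mul ((n3:ℝ):ℂ))).add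
        ((hw.pow 4).const_mul ((n4:ℝ):ℂ))
      have p2 := (((pmlim.mul hDn).add (pnlim.mul hDm)).add
        (hDm.mul (hDn.mul (hw.pow 4)))).const_mul ((1:ℂ)-(t:ℂ))
      have p3 := (((((((hzw1.pow 3).mul hw).const_mul ((m1*n4 + m2*n3 + m3*n2 + m4*n1 : ℝ) : ℂ)).add
        (((hzw1.pow 2).mul (hw.pow 2)).const_mul ((m2*n4 + m3*n3 + m4*n2 : ℝ) : ℂ))).add
        ((hzw1.mul (hw.pow 3)).const_mul ((m3*n4 + m4*n3 : ℝ) : ℂ))).add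
        ((hw.pow 4).const_mul ((m4*n4 : ℝ) : ℂ)))).const_mul ((1:ℂ)-(t:ℂ))
      have h := (p1.add p2).add p3
      convert h using 2
      norm_num
    refine hN.congr' ?_
    filter_upwards [eventually_gt_atTop (0:ℝ)] with y hy
    have hz : ((I:ℂ)*y) ≠ 0 :=
      mul_ne_zero Complex.I_ne_zero (Complex.ofReal_ne_zero.mpr hy.ne')
    have hzw : ((I:ℂ)*y) * ((I:ℂ)*y)⁻¹ = 1 := mul_inv_cancel₀ hz
    have him : 0 < (((I:ℂ)*y)).im := by simpa using hy
    have hgm : cg μ ((I:ℂ)*y) ≠ 0 := cg_ne_zero μ him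
    have hgn : cg ν ((I:ℂ)*y) ≠ 0 := cg_ne_zero ν him
    have hb : (cg ν ((I:ℂ)*y))⁻¹ = (t:ℂ)*(cg μ ((I:ℂ)*y))⁻¹ + (1 - (t:ℂ))*((I:ℂ)*y) := hboole _ him
    have hgrel : cg μ ((I:ℂ)*y) = (t:ℂ)*cg ν ((I:ℂ)*y) + (1-(t:ℂ))*((I:ℂ)*y)*cg ν ((I:ℂ)*y)*cg μ ((I:ℂ)*y) := by
      have e := congrArg (fun u : ℂ => u * (cg ν ((I:ℂ)*y) * cg μ ((I:ℂ)*y))) hb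
      have l : (cg ν ((I:ℂ)*y))⁻¹ * (cg ν ((I:ℂ)*y) * cg μ ((I:ℂ)*y)) = cg μ ((I:ℂ)*y) := by
        linear_combination (cg μ ((I:ℂ)*y)) * (inv_mul_cancel₀ hgn)
      have r : ((t:ℂ)*(cg μ ((I:ℂ)*y))⁻¹ + (1 - (t:ℂ))*((I:ℂ)*y)) * (cg ν ((I:ℂ)*y) * cg μ ((I:ℂ)*y))
          = (t:ℂ)*cg ν ((I:ℂ)*y) + (1-(t:ℂ))*((I:ℂ)*y)*cg ν ((I:ℂ)*y)*cg μ ((I:ℂ)*y) := by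
        linear_combination ((t:ℂ)*cg ν ((I:ℂ)*y)) * (inv_mul_cancel₀ hgm)
      rw [l, r] at e
      exact e
    have e1 := cg_expand μ h4μ y hy
    have e2 := cg_expand ν h4ν y hy
    rw [← hm1def, ← hm2def, ← hm3def, ← hm4def] at e1
    rw [← hn1def, ← hn2def, ← hn3def, ← hn4def] at e2
    have hId : ((I:ℂ)*y)^4 * ((((I:ℂ)*y)^4 + (m1:ℂ)*((I:ℂ)*y)^3 + (m2:ℂ)*((I:ℂ)*y)^2 + (m3:ℂ)*((I:ℂ)*y) + (m4:ℂ)) + (∫ x : ℝ, ((x:ℂ))^5 * (((I:ℂ)*y) - (x:ℂ))⁻¹ ∂μ))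
        = (t:ℂ) * (((I:ℂ)*y)^4 * ((((I:ℂ)*y)^4 + (n1:ℂ)*((I:ℂ)*y)^3 + (n2:ℂ)*((I:ℂ)*y)^2 + (n3:ℂ)*((I:ℂ)*y) + (n4:ℂ)) + (∫ x : ℝ, ((x:ℂ))^5 * (((I:ℂ)*y) - (x:ℂ))⁻¹ ∂ν)))
          + (1-(t:ℂ)) * (((((I:ℂ)*y)^4 + (m1:ℂ)*((I:ℂ)*y)^3 + (m2:ℂ)*((I:ℂ)*y)^2 + (m3:ℂ)*((I:ℂ)*y) + (m4:ℂ)) + (∫ x : ℝ, ((x:ℂ))^5 * (((I:ℂ)*y) - (x:ℂ))⁻¹ ∂μ)) * ((((I:ℂ)*y)^4 + (n1:ℂ)*((I:ℂ)*y)^3 + (n2:ℂ)*((I:ℂ)*y)^2 + (n3:ℂ)*((I:ℂ)*y) + (n4:ℂ)) + (∫ x : ℝ, ((x:ℂ))^5 * (((I:ℂ)*y) - (x:ℂ))⁻¹ ∂ν))) := by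
      rw [← e1, ← e2]
      linear_combination (((I:ℂ)*y)^9) * hgrel
    push_cast at hId ⊢
    linear_combination (-(((((I:ℂ)*y)⁻¹)^4) * hId))
      + (((((t:ℂ)*(m1:ℂ) - (n1:ℂ))*((I:ℂ)*y)^3 + ((t:ℂ)*(m2:ℂ) - (n2:ℂ) - (1-(t:ℂ))*(m1:ℂ)*(n1:ℂ))*((I:ℂ)*y)^2 + ((t:ℂ)*(m3:ℂ) - (n3:ℂ) - (1-(t:ℂ))*((m1:ℂ)*(n2:ℂ) + (m2:ℂ)*(n1:ℂ)))*((I:ℂ)*y) + ((t:ℂ)*(m4:ℂ) - (n4:ℂ) - (1-(t:ℂ))*((m1:ℂ)*(n3:ℂ) + (m2:ℂ)*(n2:ℂ) + (m3:ℂ)*(n1:ℂ)))) * ((((I:ℂ)*y) * ((I:ℂ)*y)⁻¹)^3 + (((I:ℂ)*y) * ((I:ℂ)*y)⁻¹)^2 + (((I:ℂ)*y) * ((I:ℂ)*y)⁻¹) + 1))) * hzw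
  obtain ⟨hC1, hC2, hC3, hC4⟩ := coeff_zero _ _ _ _ key
  have r1 : t*m1 - n1 = 0 := by exact_mod_cast hC1
  have r2 : t*m2 - n2 - (1-t)*m1*n1 = 0 := by exact_mod_cast hC2
  have r3 : t*m3 - n3 - (1-t)*(m1*n2 + m2*n1) = 0 := by exact_mod_cast hC3
  have r4 : t*m4 - n4 - (1-t)*(m1*n3 + m2*n2 + m3*n1) = 0 := by exact_mod_cast hC4
  have hn1 : n1 = t*m1 := by linear_combination -r1
  have hn2 : n2 = t*m2 - (1-t)*m1*(t*m1) := by linear_combination -r2 - (1-t)*m1*hn1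
  have hn3 : n3 = t*m3 - (1-t)*(m1*(t*m2 - (1-t)*m1*(t*m1)) + m2*(t*m1)) := by linear_combination -r3 - (1-t)*m1*hn2 - (1-t)*m2*hn1
  have hn4 : n4 = t*m4 - (1-t)*(m1*(t*m3 - (1-t)*(m1*(t*m2 - (1-t)*m1*(t*m1)) + m2*(t*m1))) + m2*(t*m2 - (1-t)*m1*(t*m1)) + m3*(t*m1)) := by
    linear_combination -r4 - (1-t)*m1*hn3 - (1-t)*m2*hn2 - (1-t)*m3*hn1
  -- moment forms of the Jacobi parameters
  have hB0μ : jacobiB0 μ = m1 := by rw [jacobiB0_eq, ← hm1def]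
  have hB0ν : jacobiB0 ν = n1 := by rw [jacobiB0_eq, ← hn1def]
  have hG0μ : jacobiG0 μ = m2 - m1^2 := by
    rw [jacobiG0, hB0μ,
      integral_quartic_eq μ h4μ _ (m1^2) (-2*m1) 1 0 0 (fun x => by ring),
      ← hm1def, ← hm2def, ← hm3def, ← hm4def]
    ring
  have hG0ν : jacobiG0 ν = n2 - n1^2 := by
    rw [jacobiG0, hB0ν,
      integral_quartic_eq ν h4ν _ (n1^2) (-2*n1) 1 0 0 (fun x => by ring),
      ← hn1def, ← hn2def, ← hn3def, ← hn4def]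
    ring
  have hγ0' : m2 - m1^2 ≠ 0 := by rw [hG0μ] at hγ0; exact hγ0
  have hγ0ν : n2 - n1^2 ≠ 0 := by
    have h : n2 - n1^2 = t*(m2 - m1^2) := by rw [hn2, hn1]; ring
    rw [h]
    exact mul_ne_zero ht.ne' hγ0'
  have hB1μ : jacobiB1 μ = (m3 - 2*m1*m2 + m1^3) / (m2 - m1^2) := by
    rw [jacobiB1, hB0μ, hG0μ,
      integral_quartic_eq μ h4μ _ 0 (m1^2) (-2*m1) 1 0 (fun x => by ring),
      ← hm1def, ← hm2def, ← hm3def, ← hm4def]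
    ring_nf
  have hB1ν : jacobiB1 ν = (n3 - 2*n1*n2 + n1^3) / (n2 - n1^2) := by
    rw [jacobiB1, hB0ν, hG0ν,
      integral_quartic_eq ν h4ν _ 0 (n1^2) (-2*n1) 1 0 (fun x => by ring),
      ← hn1def, ← hn2def, ← hn3def, ← hn4def]
    ring_nf
  -- the four conclusions
  have g1 : jacobiB0 ν = t * jacobiB0 μ := by
    rw [hB0ν, hB0μ]; linarith [r1]
  have g2 : jacobiG0 ν = t * jacobiG0 μ := by
    rw [hG0ν, hG0μ, hn2, hn1]; ring
  have g3 : jacobiB1 ν = jacobiB1 μ := by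
    rw [hB1ν, hB1μ, div_eq_div_iff hγ0ν hγ0', hn3, hn2, hn1]
    ring
  have g4 : jacobiG1 ν = jacobiG1 μ := by
    rw [jacobiG1, jacobiG1, g3, hB0ν, hB0μ, hG0ν, hG0μ]
    set c := jacobiB1 μ with hcdef
    rw [integral_quartic_eq ν h4ν _
        ((n1*c - (n2-n1^2))^2) (-2*(n1+c)*(n1*c - (n2-n1^2)))
        ((n1+c)^2 + 2*(n1*c - (n2-n1^2))) (-2*(n1+c)) 1 (fun x => by ring),
      integral_quartic_eq μ h4μ _
        ((m1*c - (m2-m1^2))^2) (-2*(m1+c)*(m1*c - (m2-m1^2)))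
        ((m1+c)^2 + 2*(m1*c - (m2-m1^2))) (-2*(m1+c)) 1 (fun x => by ring),
      ← hm1def, ← hm2def, ← hm3def, ← hm4def,
      ← hn1def, ← hn2def, ← hn3def, ← hn4def,
      div_eq_div_iff hγ0ν hγ0', hn4, hn3, hn2, hn1]
    ring
  exact ⟨g1, g2, g3, g4⟩
end
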